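/- Let a_1,…,a_n be positive integers that can be partitioned into two subsets with equal sums, let G be the weighted graph G(a_1,…,a_n), and let D = 1 + (1/2)·Σ_{i=1}^n a_i − ε, where ε = 1/m and m is the number of edges of G. Then G admits a strong orientation whose weighted diameter is at most D. -/

import Mathlib

def IsOrientation {V : Type*} (G : SimpleGraph V) (D : V → V → Prop) : Prop :=
  (∀ u v, D u v → G.Adj u v) ∧ ∀ u v, G.Adj u v → (D u v ↔ ¬ D v u)

/-- `f : Fin (k+1) → V` is a directed walk of length `k` from `u` to `v` in the digraph `D`. -/
def IsDiwalk {V : Type*} (D : V → V → Prop) {k : ℕ} (f : Fin (k + 1) → V) (u v : V) : Prop :=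
  f 0 = u ∧ f (Fin.last k) = v ∧ ∀ i : Fin k, D (f i.castSucc) (f i.succ)

/-- A digraph is strong if every vertex is reachable from every other vertex. -/
def IsStrong {V : Type*} (D : V → V → Prop) : Prop :=
  ∀ u v : V, ∃ (k : ℕ) (f : Fin (k + 1) → V), IsDiwalk D f u v

/-- Directed distance: the length of a shortest directed walk from `u` to `v`. -/
noncomputable def dirDist {V : Type*} (D : V → V → Prop) (u v : V) : ℕ :=
  sInf {k | ∃ f : Fin (k + 1) → V, IsDiwalk D f u v}

/-- Diameter of a digraph: maximum directed distance over ordered pairs of distinct vertices. -/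
noncomputable def dirDiam {V : Type*} (D : V → V → Prop) : ℕ :=
  sSup {d | ∃ u v : V, u ≠ v ∧ d = dirDist D u v}

/-- Vertices of the gadget graph `G(a₁,…,aₙ)`: top-row vertices `v i` and bottom-row
vertices `w i` for the columns `i = 0, …, n`, the subdivision vertices `s` and `t`, and the
inner-cycle vertices `d j`, `d' j` replacing the internal vertical edge at column `j + 1`
(for `j : Fin (n - 1)`). -/
inductive GV (n : ℕ) : Type
  | v (i : Fin (n + 1))
  | w (i : Fin (n + 1))
  | s
  | t
  | d (j : Fin (n - 1))
  | d' (j : Fin (n - 1))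

/-- The internal column corresponding to the index `j : Fin (n - 1)` is column `j + 1`. -/
def GV.col {n : ℕ} (j : Fin (n - 1)) : Fin (n + 1) :=
  ⟨(j : ℕ) + 1, by have := j.isLt; omega⟩

/-- The edges of the gadget graph `G(a₁,…,aₙ)`: the top edges `(v i, v (i+1))`, the bottom
edges `(w i, w (i+1))`, the subdivided left and right vertical edges through `s` resp. `t`,
and for each internal column the 4-cycle `v, d, w, d'`. -/
def gridEdges (n : ℕ) : Set (Sym2 (GV n)) :=
  {e | (∃ i : Fin n, e = s(GV.v i.castSucc, GV.v i.succ)) ∨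
       (∃ i : Fin n, e = s(GV.w i.castSucc, GV.w i.succ)) ∨
       e = s(GV.s, GV.v 0) ∨ e = s(GV.s, GV.w 0) ∨
       e = s(GV.t, GV.v (Fin.last n)) ∨ e = s(GV.t, GV.w (Fin.last n)) ∨
       (∃ j : Fin (n - 1),
         e = s(GV.d j, GV.v (GV.col j)) ∨ e = s(GV.d j, GV.w (GV.col j)) ∨
         e = s(GV.d' j, GV.v (GV.col j)) ∨ e = s(GV.d' j, GV.w (GV.col j)))}

/-- The gadget graph `G(a₁,…,aₙ)` (as an unweighted simple graph). -/
def gridGraph (n : ℕ) : SimpleGraph (GV n) := SimpleGraph.fromEdgeSet (gridEdges n)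

/-- The edge weights of `G(a₁,…,aₙ)`: the top edge `(v i, v (i+1))` gets weight `aᵢ`
(indexed so that `min i (i+1) = i`), and every other edge gets weight `ε`. -/
noncomputable def gridWt (n : ℕ) (a : Fin n → ℕ) (ε : ℝ) : GV n → GV n → ℝ
  | GV.v i, GV.v j =>
      if h : min (i : ℕ) (j : ℕ) < n then (a ⟨min (i : ℕ) (j : ℕ), h⟩ : ℝ) else ε
  | _, _ => ε

/-- Weighted directed distance: the least total weight of a directed walk from `u` to `v`. -/
noncomputable def wDirDist {V : Type*} (D : V → V → Prop) (wt : V → V → ℝ) (u v : V) : ℝ :=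
  sInf {x | ∃ (k : ℕ) (f : Fin (k + 1) → V), IsDiwalk D f u v ∧
    x = ∑ i : Fin k, wt (f i.castSucc) (f i.succ)}

/-- Weighted diameter of an orientation: the maximum weighted directed distance over
ordered pairs of distinct vertices. -/
noncomputable def wDirDiam {V : Type*} (D : V → V → Prop) (wt : V → V → ℝ) : ℝ :=
  sSup {x | ∃ u v : V, u ≠ v ∧ x = wDirDist D wt u v}


section routes
variable {V : Type*} (D : V → V → Prop) (wt : V → V → ℝ)

def lend : V → List V → V
  | u, [] => u
  | _, x :: l => lend x l

def lwt : V → List V → ℝ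
  | _, [] => 0
  | u, x :: l => wt u x + lwt x l

def Route (u v : V) (b : ℝ) : Prop :=
  ∃ l : List V, List.Chain D u l ∧ lend u l = v ∧ lwt wt u l ≤ b

variable {D wt}

lemma lend_append (u : V) (l₁ l₂ : List V) : lend u (l₁ ++ l₂) = lend (lend u l₁) l₂ := by
  induction l₁ generalizing u with
  | nil => rfl
  | cons x l ih => simp [lend, ih]

lemma lwt_append (u : V) (l₁ l₂ : List V) :
    lwt wt u (l₁ ++ l₂) = lwt wt u l₁ + lwt wt (lend u l₁) l₂ := by
  induction l₁ generalizing u with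
  | nil => simp [lwt, lend]
  | cons x l ih => simp [lwt, lend, ih]; ring

lemma chain_append {u : V} {l₁ l₂ : List V} (h₁ : List.Chain D u l₁)
    (h₂ : List.Chain D (lend u l₁) l₂) : List.Chain D u (l₁ ++ l₂) := by
  induction l₁ generalizing u with
  | nil => exact h₂
  | cons x l ih =>
    obtain ⟨hd, ht⟩ := List.isChain_cons_cons.mp h₁
    exact List.Chain.cons ‹_› (ih ht h₂)

lemma Route.refl (u : V) : Route D wt u u 0 := ⟨[], List.Chain.nil, rfl, le_refl _⟩

lemma Route.single {u v : V} (h : D u v) {b : ℝ} (hb : wt u v ≤ b) : Route D wt u v b :=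
  ⟨[v], List.Chain.cons h List.Chain.nil, rfl, by simpa [lwt] using hb⟩

lemma Route.trans {u v z : V} {b₁ b₂ : ℝ} (h₁ : Route D wt u v b₁) (h₂ : Route D wt v z b₂) :
    Route D wt u z (b₁ + b₂) := by
  obtain ⟨l₁, hc₁, he₁, hw₁⟩ := h₁
  obtain ⟨l₂, hc₂, he₂, hw₂⟩ := h₂
  refine ⟨l₁ ++ l₂, chain_append hc₁ (he₁ ▸ hc₂), ?_, ?_⟩
  · rw [lend_append, he₁, he₂]
  · rw [lwt_append, he₁]; exact add_le_add hw₁ hw₂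

lemma Route.mono {u v : V} {b b' : ℝ} (h : Route D wt u v b) (hb : b ≤ b') : Route D wt u v b' := by
  obtain ⟨l, hc, he, hw⟩ := h; exact ⟨l, hc, he, hw.trans hb⟩

lemma Route.step {u x v : V} {b : ℝ} (h : D u x) (hb : wt u x ≤ b) {b' : ℝ}
    (h' : Route D wt x v b') : Route D wt u v (b + b') :=
  (Route.single h hb).trans h'

/-- Convert a chain into an `IsDiwalk` with equal weight. -/
lemma exists_diwalk (u : V) (l : List V) (h : List.Chain D u l) :
    ∃ (k : ℕ) (f : Fin (k + 1) → V), IsDiwalk D f u (lend u l) ∧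
      (∑ i : Fin k, wt (f i.castSucc) (f i.succ)) = lwt wt u l := by
  induction l generalizing u with
  | nil =>
    exact ⟨0, fun _ => u, ⟨rfl, rfl, fun i => i.elim0⟩, by simp [lwt]⟩
  | cons x l ih =>
    obtain ⟨hd, ht⟩ := List.isChain_cons_cons.mp h
    obtain ⟨k, f, ⟨hf0, hfl, hfc⟩, hfw⟩ := ih x ht
    refine ⟨k + 1, Fin.cons u f, ⟨rfl, ?_, ?_⟩, ?_⟩
    · rw [← Fin.succ_last, Fin.cons_succ, hfl]
      simp [lend]
    · intro i
      induction i using Fin.cases with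
      | zero =>
        rw [Fin.castSucc_zero, Fin.cons_zero, Fin.cons_succ, hf0]
        exact hd
      | succ j =>
        rw [← Fin.succ_castSucc, Fin.cons_succ, Fin.cons_succ]
        exact hfc j
    · rw [Fin.sum_univ_succ, Fin.castSucc_zero, Fin.cons_zero, Fin.cons_succ, hf0]
      simp only [lwt]
      congr 1

end routes

section orient
variable {n : ℕ}

deriving instance DecidableEq for GV
deriving instance Fintype for GV

/-- `memS S c` : the cut `c` belongs to `S` (vacuously true when `c ≥ n`). -/
def memS (S : Finset (Fin n)) (c : ℕ) : Prop :=
  if h : c < n then (⟨c, h⟩ : Fin n) ∈ S else True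

instance (S : Finset (Fin n)) (c : ℕ) : Decidable (memS S c) := by
  unfold memS; infer_instance

/-- The strong orientation of the gadget graph determined by `S`. -/
def orient (S : Finset (Fin n)) : GV n → GV n → Prop
  | GV.v i, GV.v j => ((i:ℕ)+1 = j ∧ memS S i) ∨ ((j:ℕ)+1 = i ∧ ¬ memS S j)
  | GV.w i, GV.w j => ((i:ℕ)+1 = j ∧ ¬ memS S i) ∨ ((j:ℕ)+1 = i ∧ memS S j)
  | GV.v i, GV.d j => i = GV.col j
  | GV.d j, GV.w i => i = GV.col j
  | GV.w i, GV.d' j => i = GV.col j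
  | GV.d' j, GV.v i => i = GV.col j
  | GV.s, GV.v i => i = 0 ∧ memS S 0
  | GV.v i, GV.s => i = 0 ∧ ¬ memS S 0
  | GV.s, GV.w i => i = 0 ∧ ¬ memS S 0
  | GV.w i, GV.s => i = 0 ∧ memS S 0
  | GV.v i, GV.t => i = Fin.last n ∧ memS S (n-1)
  | GV.t, GV.v i => i = Fin.last n ∧ ¬ memS S (n-1)
  | GV.w i, GV.t => i = Fin.last n ∧ ¬ memS S (n-1)
  | GV.t, GV.w i => i = Fin.last n ∧ memS S (n-1)
  | _, _ => False

lemma orient_adj (S : Finset (Fin n)) (u v : GV n) (h : orient S u v) : (gridGraph n).Adj u v := by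
  rw [gridGraph, SimpleGraph.fromEdgeSet_adj]
  cases u <;> cases v <;> (try exact h.elim)
  case v.v i j =>
    rcases h with ⟨h1, _⟩ | ⟨h1, _⟩
    · refine ⟨Or.inl ⟨⟨(i:ℕ), by have := j.isLt; omega⟩, ?_⟩, ?_⟩
      · simp [Sym2.eq_iff, Fin.ext_iff]; omega
      · simp [Fin.ext_iff]; omega
    · refine ⟨Or.inl ⟨⟨(j:ℕ), by have := i.isLt; omega⟩, ?_⟩, ?_⟩
      · simp [Sym2.eq_iff, Fin.ext_iff]; omega
      · simp [Fin.ext_iff]; omega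
  case w.w i j =>
    rcases h with ⟨h1, _⟩ | ⟨h1, _⟩
    · refine ⟨Or.inr (Or.inl ⟨⟨(i:ℕ), by have := j.isLt; omega⟩, ?_⟩), ?_⟩
      · simp [Sym2.eq_iff, Fin.ext_iff]; omega
      · simp [Fin.ext_iff]; omega
    · refine ⟨Or.inr (Or.inl ⟨⟨(j:ℕ), by have := i.isLt; omega⟩, ?_⟩), ?_⟩
      · simp [Sym2.eq_iff, Fin.ext_iff]; omega
      · simp [Fin.ext_iff]; omega
  case v.s i =>
    obtain ⟨h1, _⟩ := h; subst h1
    exact ⟨Or.inr (Or.inr (Or.inl (by rw [Sym2.eq_swap]))), by simp⟩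
  case s.v i =>
    obtain ⟨h1, _⟩ := h; subst h1
    exact ⟨Or.inr (Or.inr (Or.inl rfl)), by simp⟩
  case w.s i =>
    obtain ⟨h1, _⟩ := h; subst h1
    exact ⟨Or.inr (Or.inr (Or.inr (Or.inl (by rw [Sym2.eq_swap])))), by simp⟩
  case s.w i =>
    obtain ⟨h1, _⟩ := h; subst h1
    exact ⟨Or.inr (Or.inr (Or.inr (Or.inl rfl))), by simp⟩
  case v.t i =>
    obtain ⟨h1, _⟩ := h; subst h1
    exact ⟨Or.inr (Or.inr (Or.inr (Or.inr (Or.inl (by rw [Sym2.eq_swap]))))), by simp⟩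
  case t.v i =>
    obtain ⟨h1, _⟩ := h; subst h1
    exact ⟨Or.inr (Or.inr (Or.inr (Or.inr (Or.inl rfl)))), by simp⟩
  case w.t i =>
    obtain ⟨h1, _⟩ := h; subst h1
    exact ⟨Or.inr (Or.inr (Or.inr (Or.inr (Or.inr (Or.inl (by rw [Sym2.eq_swap])))))), by simp⟩
  case t.w i =>
    obtain ⟨h1, _⟩ := h; subst h1
    exact ⟨Or.inr (Or.inr (Or.inr (Or.inr (Or.inr (Or.inl rfl))))), by simp⟩
  case v.d i j =>
    subst h
    exact ⟨Or.inr (Or.inr (Or.inr (Or.inr (Or.inr (Or.inr ⟨j, Or.inl (by rw [Sym2.eq_swap])⟩))))),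
      by simp⟩
  case d.w j i =>
    subst h
    exact ⟨Or.inr (Or.inr (Or.inr (Or.inr (Or.inr (Or.inr ⟨j, Or.inr (Or.inl rfl)⟩))))), by simp⟩
  case w.d' i j =>
    subst h
    exact ⟨Or.inr (Or.inr (Or.inr (Or.inr (Or.inr (Or.inr ⟨j,
      Or.inr (Or.inr (Or.inr (by rw [Sym2.eq_swap])))⟩))))), by simp⟩
  case d'.v j i =>
    subst h
    exact ⟨Or.inr (Or.inr (Or.inr (Or.inr (Or.inr (Or.inr ⟨j,
      Or.inr (Or.inr (Or.inl rfl))⟩))))), by simp⟩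

end orient

section flip
variable {n : ℕ}

lemma orient_flip (S : Finset (Fin n)) (u v : GV n) (h : (gridGraph n).Adj u v) :
    orient S u v ↔ ¬ orient S v u := by
  rw [gridGraph, SimpleGraph.fromEdgeSet_adj] at h
  obtain ⟨he, hne⟩ := h
  simp only [gridEdges, Set.mem_setOf_eq] at he
  rcases he with ⟨i, hi⟩ | ⟨i, hi⟩ | hi | hi | hi | hi | ⟨j, hi | hi | hi | hi⟩ <;>
    rw [Sym2.eq_iff] at hi <;>
    rcases hi with ⟨h1, h2⟩ | ⟨h1, h2⟩ <;> subst h1 <;> subst h2 <;>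
    simp only [orient, Fin.coe_castSucc, Fin.val_succ] <;>
    first
      | (by_cases hm1 : memS S (i:ℕ) <;> by_cases hm2 : memS S ((i:ℕ)+1) <;>
          simp [hm1, hm2] <;> omega)
      | simp
      | (by_cases hm : memS S 0 <;> simp [hm])
      | (by_cases hm : memS S (n-1) <;> simp [hm])

end flip

lemma orient_isOrientation {n : ℕ} (S : Finset (Fin n)) :
    IsOrientation (gridGraph n) (orient S) :=
  ⟨orient_adj S, fun u v h => orient_flip S u v h⟩

section count
variable {n : ℕ}

/-- Enumeration of (many of) the edges of the grid graph. -/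
def edgeEnum (n : ℕ) :
    (Fin n ⊕ Fin n) ⊕ ((Fin (n-1) ⊕ Fin (n-1)) ⊕ (Fin (n-1) ⊕ Fin (n-1))) ⊕
      ((Unit ⊕ Unit) ⊕ (Unit ⊕ Unit)) → Sym2 (GV n)
  | .inl (.inl i) => s(GV.v i.castSucc, GV.v i.succ)
  | .inl (.inr i) => s(GV.w i.castSucc, GV.w i.succ)
  | .inr (.inl (.inl (.inl j))) => s(GV.d j, GV.v (GV.col j))
  | .inr (.inl (.inl (.inr j))) => s(GV.d j, GV.w (GV.col j))
  | .inr (.inl (.inr (.inl j))) => s(GV.d' j, GV.v (GV.col j))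
  | .inr (.inl (.inr (.inr j))) => s(GV.d' j, GV.w (GV.col j))
  | .inr (.inr (.inl (.inl _))) => s(GV.s, GV.v 0)
  | .inr (.inr (.inl (.inr _))) => s(GV.s, GV.w 0)
  | .inr (.inr (.inr (.inl _))) => s(GV.t, GV.v (Fin.last n))
  | .inr (.inr (.inr (.inr _))) => s(GV.t, GV.w (Fin.last n))

lemma edgeEnum_injective : Function.Injective (edgeEnum n) := by
  intro x y h
  rcases x with (i|i)|((j|j)|(j|j))|((u|u)|(u|u)) <;>
    rcases y with (i'|i')|((j'|j')|(j'|j'))|((u'|u')|(u'|u')) <;>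
    simp only [edgeEnum, Sym2.eq_iff, GV.v.injEq, GV.w.injEq, GV.d.injEq, GV.d'.injEq,
      reduceCtorEq, false_and, and_false, or_self, or_false, false_or, and_self] at h <;>
    first
      | rfl
      | (exfalso; revert h; simp [Fin.ext_iff]; omega)
      | (rcases h with h | h <;> simp_all [Fin.ext_iff] <;> omega)

lemma edgeEnum_mem (x) : edgeEnum n x ∈ (gridGraph n).edgeSet := by
  rw [gridGraph, SimpleGraph.edgeSet_fromEdgeSet]
  refine ⟨?_, ?_⟩
  · rcases x with (i|i)|((j|j)|(j|j))|((u|u)|(u|u)) <;> simp only [edgeEnum, gridEdges,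
      Set.mem_setOf_eq]
    · exact Or.inl ⟨i, rfl⟩
    · exact Or.inr (Or.inl ⟨i, rfl⟩)
    · exact Or.inr (Or.inr (Or.inr (Or.inr (Or.inr (Or.inr ⟨j, Or.inl rfl⟩)))))
    · exact Or.inr (Or.inr (Or.inr (Or.inr (Or.inr (Or.inr ⟨j, Or.inr (Or.inl rfl)⟩)))))
    · exact Or.inr (Or.inr (Or.inr (Or.inr (Or.inr (Or.inr ⟨j, Or.inr (Or.inr (Or.inl rfl))⟩)))))
    · exact Or.inr (Or.inr (Or.inr (Or.inr (Or.inr (Or.inr ⟨j,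
        Or.inr (Or.inr (Or.inr rfl))⟩)))))
    · exact Or.inr (Or.inr (Or.inl trivial))
    · exact Or.inr (Or.inr (Or.inr (Or.inl trivial)))
    · exact Or.inr (Or.inr (Or.inr (Or.inr (Or.inl trivial))))
    · exact Or.inr (Or.inr (Or.inr (Or.inr (Or.inr (Or.inl trivial)))))
  · rcases x with (i|i)|((j|j)|(j|j))|((u|u)|(u|u)) <;>
      simp [edgeEnum, Sym2.mk_isDiag_iff, Fin.ext_iff]
    all_goals omega

lemma edgeCount_ge : 2 * n + 4 * (n - 1) + 4 ≤ (gridGraph n).edgeSet.ncard := by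
  have hinj := edgeEnum_injective (n := n)
  have hsub : Set.range (edgeEnum n) ⊆ (gridGraph n).edgeSet := by
    rintro e ⟨x, rfl⟩; exact edgeEnum_mem x
  have h1 : Nat.card (Set.range (edgeEnum n)) =
      Nat.card ((Fin n ⊕ Fin n) ⊕ ((Fin (n-1) ⊕ Fin (n-1)) ⊕ (Fin (n-1) ⊕ Fin (n-1))) ⊕
      ((Unit ⊕ Unit) ⊕ (Unit ⊕ Unit))) := Nat.card_range_of_injective hinj
  have h2 : (Set.range (edgeEnum n)).ncard ≤ (gridGraph n).edgeSet.ncard :=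
    Set.ncard_le_ncard hsub (Set.toFinite _)
  have h3 : (Set.range (edgeEnum n)).ncard = 2 * n + 4 * (n - 1) + 4 := by
    rw [← Nat.card_coe_set_eq, h1, Nat.card_eq_fintype_card]
    simp only [Fintype.card_sum, Fintype.card_fin, Fintype.card_unit]
    omega
  omega

end count

section moves
variable {n : ℕ}

/-- Top vertex at column `c`. -/
abbrev Vc (c : ℕ) (h : c ≤ n) : GV n := GV.v ⟨c, Nat.lt_succ_of_le h⟩
/-- Bottom vertex at column `c`. -/
abbrev Wc (c : ℕ) (h : c ≤ n) : GV n := GV.w ⟨c, Nat.lt_succ_of_le h⟩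

variable (S : Finset (Fin n)) (a : Fin n → ℕ) (ε : ℝ)

/-- Abbreviation for routes in the oriented weighted grid graph. -/
abbrev RT (u v : GV n) (b : ℝ) : Prop := Route (orient S) (gridWt n a ε) u v b

variable {S a ε}

lemma wt_eps_vd (i j) : gridWt n a ε (GV.v i) (GV.d j) = ε := rfl
lemma wt_top {c : ℕ} (hc : c < n) (h1 h2) :
    gridWt n a ε (GV.v ⟨c, h1⟩) (GV.v ⟨c+1, h2⟩) = a ⟨c, hc⟩ := by
  have hm : min c (c+1) = c := by omega
  simp only [gridWt, hm, hc, dif_pos]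
lemma wt_top' {c : ℕ} (hc : c < n) (h1 h2) :
    gridWt n a ε (GV.v ⟨c+1, h2⟩) (GV.v ⟨c, h1⟩) = a ⟨c, hc⟩ := by
  have hm : min (c+1) c = c := by omega
  simp only [gridWt, hm, hc, dif_pos]

lemma col_eq {c : ℕ} (h1 : 1 ≤ c) (h2 : c ≤ n - 1) (h3 : c ≤ n) :
    GV.col (⟨c - 1, by omega⟩ : Fin (n-1)) = (⟨c, Nat.lt_succ_of_le h3⟩ : Fin (n+1)) := by
  simp only [GV.col, Fin.mk.injEq]
  omega

lemma last_eq (h : n ≤ n) : (⟨n, Nat.lt_succ_of_le h⟩ : Fin (n+1)) = Fin.last n := rfl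

section basic
variable (hε : 0 ≤ ε)
include hε

lemma step_top_r {c : ℕ} (hc : c < n) (hm : memS S c) (h1 h2) :
    RT S a ε (Vc c h1) (Vc (c+1) h2) ((a ⟨c, hc⟩ : ℝ)) := by
  refine Route.single ?_ (le_of_eq (wt_top hc _ _)); exact Or.inl ⟨rfl, hm⟩

lemma step_top_l {c : ℕ} (hc : c < n) (hm : ¬ memS S c) (h1 h2) :
    RT S a ε (Vc (c+1) h2) (Vc c h1) ((a ⟨c, hc⟩ : ℝ)) := by
  refine Route.single ?_ (le_of_eq (wt_top' hc _ _)); exact Or.inr ⟨rfl, hm⟩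

lemma step_bot_r {c : ℕ} (hc : c < n) (hm : ¬ memS S c) (h1 h2) :
    RT S a ε (Wc c h1) (Wc (c+1) h2) ε := by
  refine Route.single ?_ le_rfl; exact Or.inl ⟨rfl, hm⟩

lemma step_bot_l {c : ℕ} (hc : c < n) (hm : memS S c) (h1 h2) :
    RT S a ε (Wc (c+1) h2) (Wc c h1) ε := by
  refine Route.single ?_ le_rfl; exact Or.inr ⟨rfl, hm⟩

lemma step_vd {c : ℕ} (h1 : 1 ≤ c) (h2 : c ≤ n - 1) (h3) :
    RT S a ε (Vc c h3) (GV.d ⟨c - 1, by omega⟩) ε := by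
  refine Route.single ?_ le_rfl; exact (col_eq h1 h2 h3).symm

lemma step_dw {c : ℕ} (h1 : 1 ≤ c) (h2 : c ≤ n - 1) (h3) :
    RT S a ε (GV.d ⟨c - 1, by omega⟩) (Wc c h3) ε := by
  refine Route.single ?_ le_rfl; exact (col_eq h1 h2 h3).symm

lemma step_wd' {c : ℕ} (h1 : 1 ≤ c) (h2 : c ≤ n - 1) (h3) :
    RT S a ε (Wc c h3) (GV.d' ⟨c - 1, by omega⟩) ε := by
  refine Route.single ?_ le_rfl; exact (col_eq h1 h2 h3).symm

lemma step_d'v {c : ℕ} (h1 : 1 ≤ c) (h2 : c ≤ n - 1) (h3) :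
    RT S a ε (GV.d' ⟨c - 1, by omega⟩) (Vc c h3) ε := by
  refine Route.single ?_ le_rfl; exact (col_eq h1 h2 h3).symm

lemma step_sv (hm : memS S 0) : RT S a ε GV.s (Vc 0 (Nat.zero_le n)) ε := by
  refine Route.single ?_ le_rfl; exact ⟨rfl, hm⟩
lemma step_vs (hm : ¬ memS S 0) : RT S a ε (Vc 0 (Nat.zero_le n)) GV.s ε := by
  refine Route.single ?_ le_rfl; exact ⟨rfl, hm⟩
lemma step_sw (hm : ¬ memS S 0) : RT S a ε GV.s (Wc 0 (Nat.zero_le n)) ε := by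
  refine Route.single ?_ le_rfl; exact ⟨rfl, hm⟩
lemma step_ws (hm : memS S 0) : RT S a ε (Wc 0 (Nat.zero_le n)) GV.s ε := by
  refine Route.single ?_ le_rfl; exact ⟨rfl, hm⟩

lemma step_vt (hm : memS S (n-1)) : RT S a ε (Vc n le_rfl) GV.t ε := by
  refine Route.single ?_ le_rfl; exact ⟨last_eq le_rfl, hm⟩
lemma step_tv (hm : ¬ memS S (n-1)) : RT S a ε GV.t (Vc n le_rfl) ε := by
  refine Route.single ?_ le_rfl; exact ⟨last_eq le_rfl, hm⟩
lemma step_wt (hm : ¬ memS S (n-1)) : RT S a ε (Wc n le_rfl) GV.t ε := by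
  refine Route.single ?_ le_rfl; exact ⟨last_eq le_rfl, hm⟩
lemma step_tw (hm : memS S (n-1)) : RT S a ε GV.t (Wc n le_rfl) ε := by
  refine Route.single ?_ le_rfl; exact ⟨last_eq le_rfl, hm⟩

lemma down_mid {c : ℕ} (h1 : 1 ≤ c) (h2 : c ≤ n - 1) (h3) :
    RT S a ε (Vc c h3) (Wc c h3) (2 * ε) :=
  ((step_vd hε h1 h2 h3).trans (step_dw hε h1 h2 h3)).mono (by linarith)

lemma up_mid {c : ℕ} (h1 : 1 ≤ c) (h2 : c ≤ n - 1) (h3) :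
    RT S a ε (Wc c h3) (Vc c h3) (2 * ε) :=
  ((step_wd' hε h1 h2 h3).trans (step_d'v hε h1 h2 h3)).mono (by linarith)

lemma up_left (hm : memS S 0) : RT S a ε (Wc 0 (Nat.zero_le n)) (Vc 0 (Nat.zero_le n)) (2 * ε) :=
  ((step_ws hε hm).trans (step_sv hε hm)).mono (by linarith)

lemma down_left (hm : ¬ memS S 0) :
    RT S a ε (Vc 0 (Nat.zero_le n)) (Wc 0 (Nat.zero_le n)) (2 * ε) :=
  ((step_vs hε hm).trans (step_sw hε hm)).mono (by linarith)

lemma down_right (hm : memS S (n-1)) : RT S a ε (Vc n le_rfl) (Wc n le_rfl) (2 * ε) :=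
  ((step_vt hε hm).trans (step_tw hε hm)).mono (by linarith)

lemma up_right (hm : ¬ memS S (n-1)) : RT S a ε (Wc n le_rfl) (Vc n le_rfl) (2 * ε) :=
  ((step_wt hε hm).trans (step_tv hε hm)).mono (by linarith)

end basic
end moves

section travel
variable {n : ℕ}

/-- Entry/exit vertex for rightward travel at column `c`. -/
def Ax (S : Finset (Fin n)) (c : ℕ) (h : c ≤ n) : GV n :=
  if memS S (min c (n-1)) then Vc c h else Wc c h
/-- Entry/exit vertex for leftward travel at column `c`. -/
def Bx (S : Finset (Fin n)) (c : ℕ) (h : c ≤ n) : GV n :=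
  if memS S (c-1) then Wc c h else Vc c h
/-- The vertex opposite to `Ax c` (for `c < n`). -/
def Cx (S : Finset (Fin n)) (c : ℕ) (h : c ≤ n) : GV n :=
  if memS S c then Wc c h else Vc c h

variable {S : Finset (Fin n)} {a : Fin n → ℕ} {ε : ℝ}

lemma Ax_lt {c : ℕ} (hc : c < n) (h) :
    Ax S c h = if memS S c then Vc c h else Wc c h := by
  rw [Ax, show min c (n-1) = c by omega]

lemma Ax_last {c : ℕ} (hc : c + 1 = n) (h) :
    Ax S (c+1) h = if memS S c then Vc (c+1) h else Wc (c+1) h := by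
  rw [Ax, show min (c+1) (n-1) = c by omega]

lemma Bx_succ (c : ℕ) (h) :
    Bx S (c+1) h = if memS S c then Wc (c+1) h else Vc (c+1) h := by
  rw [Bx, show c + 1 - 1 = c by omega]

section haveeps
variable (hε : 0 ≤ ε)
include hε

/-- Crossing cut `c` rightward, from `Ax c` to `Ax (c+1)`. -/
lemma cross_r {c : ℕ} (hc : c < n) (h1 : c ≤ n) (h2 : c + 1 ≤ n) :
    RT S a ε (Ax S c h1) (Ax S (c+1) h2)
      ((if memS S c then (a ⟨c, hc⟩ : ℝ) else 0) + (if memS S c then 2 else 3) * ε) := by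
  rw [Ax_lt hc]
  by_cases hm : memS S c
  · rw [if_pos hm, if_pos hm, if_pos hm]
    have t1 : RT S a ε (Vc c h1) (Vc (c+1) h2) ((a ⟨c, hc⟩ : ℝ)) := step_top_r hε hc hm _ _
    have t2 : RT S a ε (Vc (c+1) h2) (Ax S (c+1) h2) (2 * ε) := by
      by_cases hcn : c + 1 < n
      · rw [Ax_lt hcn]
        by_cases hm2 : memS S (c+1)
        · rw [if_pos hm2]; exact (Route.refl _).mono (by linarith)
        · rw [if_neg hm2]; exact down_mid hε (by omega) (by omega) h2
      · rw [Ax_last (by omega), if_pos hm]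
        exact (Route.refl _).mono (by linarith)
    exact (t1.trans t2).mono (by linarith)
  · rw [if_neg hm, if_neg hm, if_neg hm]
    have t1 : RT S a ε (Wc c h1) (Wc (c+1) h2) ε := step_bot_r hε hc hm _ _
    have t2 : RT S a ε (Wc (c+1) h2) (Ax S (c+1) h2) (2 * ε) := by
      by_cases hcn : c + 1 < n
      · rw [Ax_lt hcn]
        by_cases hm2 : memS S (c+1)
        · rw [if_pos hm2]; exact up_mid hε (by omega) (by omega) h2
        · rw [if_neg hm2]; exact (Route.refl _).mono (by linarith)
      · rw [Ax_last (by omega), if_neg hm]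
        exact (Route.refl _).mono (by linarith)
    exact (t1.trans t2).mono (by linarith)

/-- Crossing cut `c` leftward, from `Bx (c+1)` to `Bx c`. -/
lemma cross_l {c : ℕ} (hc : c < n) (h1 : c ≤ n) (h2 : c + 1 ≤ n) :
    RT S a ε (Bx S (c+1) h2) (Bx S c h1)
      ((if memS S c then 0 else (a ⟨c, hc⟩ : ℝ)) + (if memS S c then 3 else 2) * ε) := by
  rw [Bx_succ]
  by_cases hm : memS S c
  · rw [if_pos hm, if_pos hm, if_pos hm]
    have t1 : RT S a ε (Wc (c+1) h2) (Wc c h1) ε := step_bot_l hε hc hm _ _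
    have t2 : RT S a ε (Wc c h1) (Bx S c h1) (2 * ε) := by
      rw [Bx]
      by_cases hm2 : memS S (c-1)
      · rw [if_pos hm2]; exact (Route.refl _).mono (by linarith)
      · rw [if_neg hm2]
        rcases Nat.eq_zero_or_pos c with hc0 | hc0
        · exact absurd (hc0 ▸ hm) hm2
        · exact up_mid hε (by omega) (by omega) h1
    exact (t1.trans t2).mono (by linarith)
  · rw [if_neg hm, if_neg hm, if_neg hm]
    have t1 : RT S a ε (Vc (c+1) h2) (Vc c h1) ((a ⟨c, hc⟩ : ℝ)) := step_top_l hε hc hm _ _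
    have t2 : RT S a ε (Vc c h1) (Bx S c h1) (2 * ε) := by
      rw [Bx]
      by_cases hm2 : memS S (c-1)
      · rw [if_pos hm2]
        rcases Nat.eq_zero_or_pos c with hc0 | hc0
        · exact absurd (hc0 ▸ hm2) hm
        · exact down_mid hε (by omega) (by omega) h1
      · rw [if_neg hm2]; exact (Route.refl _).mono (by linarith)
    exact (t1.trans t2).mono (by linarith)

omit hε in
lemma memS_iff {c : ℕ} (hc : c < n) : memS S c ↔ (⟨c, hc⟩ : Fin n) ∈ S := by
  rw [memS, dif_pos hc]

end haveeps

/-- Cuts of `S` within the window `[i, i+L)`. -/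
def SIf (S : Finset (Fin n)) (i L : ℕ) : Finset (Fin n) :=
  S.filter (fun c => i ≤ (c:ℕ) ∧ (c:ℕ) < i + L)
/-- Cuts of `Sᶜ` within the window `[i, i+L)`. -/
def CIf (S : Finset (Fin n)) (i L : ℕ) : Finset (Fin n) :=
  Sᶜ.filter (fun c => i ≤ (c:ℕ) ∧ (c:ℕ) < i + L)

lemma SIf_zero (i : ℕ) : SIf S i 0 = ∅ := by
  ext c; simp only [SIf, Finset.mem_filter, Finset.notMem_empty, iff_false, not_and]
  intro _ _; omega

lemma CIf_zero (i : ℕ) : CIf S i 0 = ∅ := by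
  ext c; simp only [CIf, Finset.mem_filter, Finset.notMem_empty, iff_false, not_and]
  intro _ _; omega

lemma SIf_succ_mem {i L : ℕ} (h : i + L < n) (hm : (⟨i+L, h⟩ : Fin n) ∈ S) :
    SIf S i (L+1) = insert ⟨i+L, h⟩ (SIf S i L) := by
  ext c
  simp only [SIf, Finset.mem_filter, Finset.mem_insert]
  constructor
  · rintro ⟨hc, hl1, hl2⟩
    by_cases h3 : (c:ℕ) = i + L
    · exact Or.inl (Fin.ext h3)
    · exact Or.inr ⟨hc, hl1, by omega⟩
  · rintro (rfl | ⟨hc, hl1, hl2⟩)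
    · exact ⟨hm, Nat.le_add_right i L, Nat.lt_succ_self _⟩
    · exact ⟨hc, hl1, by omega⟩

lemma SIf_succ_not {i L : ℕ} (h : i + L < n) (hm : (⟨i+L, h⟩ : Fin n) ∉ S) :
    SIf S i (L+1) = SIf S i L := by
  ext c
  simp only [SIf, Finset.mem_filter]
  constructor
  · rintro ⟨hc, hl1, hl2⟩
    refine ⟨hc, hl1, ?_⟩
    by_cases h3 : (c:ℕ) = i + L
    · exact absurd ((Fin.ext h3 : c = ⟨i+L, h⟩) ▸ hc) hm
    · omega
  · rintro ⟨hc, hl1, hl2⟩; exact ⟨hc, hl1, by omega⟩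

lemma CIf_succ_mem {i L : ℕ} (h : i + L < n) (hm : (⟨i+L, h⟩ : Fin n) ∉ S) :
    CIf S i (L+1) = insert ⟨i+L, h⟩ (CIf S i L) := by
  ext c
  simp only [CIf, Finset.mem_filter, Finset.mem_insert, Finset.mem_compl]
  constructor
  · rintro ⟨hc, hl1, hl2⟩
    by_cases h3 : (c:ℕ) = i + L
    · exact Or.inl (Fin.ext h3)
    · exact Or.inr ⟨hc, hl1, by omega⟩
  · rintro (rfl | ⟨hc, hl1, hl2⟩)
    · exact ⟨hm, Nat.le_add_right i L, Nat.lt_succ_self _⟩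
    · exact ⟨hc, hl1, by omega⟩

lemma CIf_succ_not {i L : ℕ} (h : i + L < n) (hm : (⟨i+L, h⟩ : Fin n) ∈ S) :
    CIf S i (L+1) = CIf S i L := by
  ext c
  simp only [CIf, Finset.mem_filter, Finset.mem_compl]
  constructor
  · rintro ⟨hc, hl1, hl2⟩
    refine ⟨hc, hl1, ?_⟩
    by_cases h3 : (c:ℕ) = i + L
    · exact absurd hm ((Fin.ext h3 : c = ⟨i+L, h⟩) ▸ hc)
    · omega
  · rintro ⟨hc, hl1, hl2⟩; exact ⟨hc, hl1, by omega⟩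

lemma notmem_SIf {i L : ℕ} (h : i + L < n) : (⟨i+L, h⟩ : Fin n) ∉ SIf S i L := by
  simp only [SIf, Finset.mem_filter, not_and]
  intro _ _; omega

lemma notmem_CIf {i L : ℕ} (h : i + L < n) : (⟨i+L, h⟩ : Fin n) ∉ CIf S i L := by
  simp only [CIf, Finset.mem_filter, not_and]
  intro _ _; omega

section sweeps
variable (hε : 0 ≤ ε)
include hε

lemma sweep_r (i L : ℕ) (h : i + L ≤ n) :
    RT S a ε (Ax S i (by omega)) (Ax S (i+L) h)
      ((∑ c ∈ SIf S i L, (a c : ℝ)) + (2*L + (CIf S i L).card) * ε) := by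
  induction L with
  | zero =>
    rw [SIf_zero, CIf_zero]
    exact (Route.refl _).mono (by simp)
  | succ L ih =>
    have hL : i + L ≤ n := by omega
    have hcn : i + L < n := by omega
    have t1 := ih hL
    have t2 := cross_r (S := S) (a := a) hε hcn hL h
    by_cases hm : memS S (i+L)
    · have hmS : (⟨i+L, hcn⟩ : Fin n) ∈ S := (memS_iff hcn).mp hm
      rw [SIf_succ_mem hcn hmS, CIf_succ_not hcn hmS, Finset.sum_insert (notmem_SIf hcn)]
      rw [if_pos hm, if_pos hm] at t2
      refine (t1.trans t2).mono ?_
      push_cast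
      ring_nf
      linarith
    · have hmS : (⟨i+L, hcn⟩ : Fin n) ∉ S := fun hc => hm ((memS_iff hcn).mpr hc)
      rw [SIf_succ_not hcn hmS, CIf_succ_mem hcn hmS,
        Finset.card_insert_of_notMem (notmem_CIf hcn)]
      rw [if_neg hm, if_neg hm] at t2
      refine (t1.trans t2).mono ?_
      push_cast
      ring_nf
      linarith

lemma sweep_l (i L : ℕ) (h : i + L ≤ n) :
    RT S a ε (Bx S (i+L) h) (Bx S i (by omega))
      ((∑ c ∈ CIf S i L, (a c : ℝ)) + (2*L + (SIf S i L).card) * ε) := by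
  induction L with
  | zero =>
    rw [SIf_zero, CIf_zero]
    exact (Route.refl _).mono (by simp)
  | succ L ih =>
    have hL : i + L ≤ n := by omega
    have hcn : i + L < n := by omega
    have t1 := ih hL
    have t2 := cross_l (S := S) (a := a) hε hcn hL h
    by_cases hm : memS S (i+L)
    · have hmS : (⟨i+L, hcn⟩ : Fin n) ∈ S := (memS_iff hcn).mp hm
      rw [SIf_succ_mem hcn hmS, CIf_succ_not hcn hmS,
        Finset.card_insert_of_notMem (notmem_SIf hcn)]
      rw [if_pos hm, if_pos hm] at t2
      refine (t2.trans t1).mono ?_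
      push_cast
      ring_nf
      linarith
    · have hmS : (⟨i+L, hcn⟩ : Fin n) ∉ S := fun hc => hm ((memS_iff hcn).mpr hc)
      rw [SIf_succ_not hcn hmS, CIf_succ_mem hcn hmS, Finset.sum_insert (notmem_CIf hcn)]
      rw [if_neg hm, if_neg hm] at t2
      refine (t2.trans t1).mono ?_
      push_cast
      ring_nf
      linarith

end sweeps

lemma Ax_n (h : n ≤ n) : Ax S n h = if memS S (n-1) then Vc n h else Wc n h := by
  rw [Ax, show min n (n-1) = n-1 by omega]

lemma Bx_n (h : n ≤ n) : Bx S n h = if memS S (n-1) then Wc n h else Vc n h := rfl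

lemma step_vd' (j : Fin (n-1)) (h) : RT S a ε (Vc ((j:ℕ)+1) h) (GV.d j) ε := by
  refine Route.single ?_ le_rfl
  show (⟨(j:ℕ)+1, _⟩ : Fin (n+1)) = GV.col j
  rfl

lemma step_dw' (j : Fin (n-1)) (h) : RT S a ε (GV.d j) (Wc ((j:ℕ)+1) h) ε := by
  refine Route.single ?_ le_rfl
  show (⟨(j:ℕ)+1, _⟩ : Fin (n+1)) = GV.col j
  rfl

lemma step_wd'' (j : Fin (n-1)) (h) : RT S a ε (Wc ((j:ℕ)+1) h) (GV.d' j) ε := by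
  refine Route.single ?_ le_rfl
  show (⟨(j:ℕ)+1, _⟩ : Fin (n+1)) = GV.col j
  rfl

lemma step_d'v' (j : Fin (n-1)) (h) : RT S a ε (GV.d' j) (Vc ((j:ℕ)+1) h) ε := by
  refine Route.single ?_ le_rfl
  show (⟨(j:ℕ)+1, _⟩ : Fin (n+1)) = GV.col j
  rfl

section access
variable (hε : 0 ≤ ε)
include hε

lemma in_r_v {c : ℕ} (hc : c < n) (h) : RT S a ε (Vc c h) (Ax S c h) (2*ε) := by
  by_cases hm : memS S c
  · rw [Ax_lt hc, if_pos hm]; exact (Route.refl _).mono (by linarith)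
  · rw [Ax_lt hc, if_neg hm]
    rcases Nat.eq_zero_or_pos c with rfl | hc1
    · exact down_left hε hm
    · exact down_mid hε hc1 (by omega) h

lemma in_r_w {c : ℕ} (hc : c < n) (h) : RT S a ε (Wc c h) (Ax S c h) (2*ε) := by
  by_cases hm : memS S c
  · rw [Ax_lt hc, if_pos hm]
    rcases Nat.eq_zero_or_pos c with rfl | hc1
    · exact up_left hε hm
    · exact up_mid hε hc1 (by omega) h
  · rw [Ax_lt hc, if_neg hm]; exact (Route.refl _).mono (by linarith)

lemma in_r_s (hn : 0 < n) : RT S a ε GV.s (Ax S 0 (Nat.zero_le n)) ε := by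
  by_cases hm : memS S 0
  · rw [Ax_lt hn, if_pos hm]; exact step_sv hε hm
  · rw [Ax_lt hn, if_neg hm]; exact step_sw hε hm

lemma in_r_d (j : Fin (n-1)) (h : (j:ℕ)+1 ≤ n) :
    RT S a ε (GV.d j) (Ax S ((j:ℕ)+1) h) (3*ε) := by
  have := j.isLt
  exact ((step_dw' j h).trans (in_r_w hε (by omega) h)).mono (by linarith)

lemma in_r_d' (j : Fin (n-1)) (h : (j:ℕ)+1 ≤ n) :
    RT S a ε (GV.d' j) (Ax S ((j:ℕ)+1) h) (3*ε) := by
  have := j.isLt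
  exact ((step_d'v' j h).trans (in_r_v hε (by omega) h)).mono (by linarith)

lemma out_r_v {k : ℕ} (hk : 1 ≤ k) (h : k ≤ n) : RT S a ε (Ax S k h) (Vc k h) (2*ε) := by
  by_cases hkn : k < n
  · by_cases hm : memS S k
    · rw [Ax_lt hkn, if_pos hm]; exact (Route.refl _).mono (by linarith)
    · rw [Ax_lt hkn, if_neg hm]; exact up_mid hε hk (by omega) h
  · have hk2 : k = n := by omega
    subst hk2
    by_cases hm : memS S (k-1)
    · rw [Ax_n, if_pos hm]; exact (Route.refl _).mono (by linarith)
    · rw [Ax_n, if_neg hm]; exact up_right hε hm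
  
lemma out_r_w {k : ℕ} (hk : 1 ≤ k) (h : k ≤ n) : RT S a ε (Ax S k h) (Wc k h) (2*ε) := by
  by_cases hkn : k < n
  · by_cases hm : memS S k
    · rw [Ax_lt hkn, if_pos hm]; exact down_mid hε hk (by omega) h
    · rw [Ax_lt hkn, if_neg hm]; exact (Route.refl _).mono (by linarith)
  · have hk2 : k = n := by omega
    subst hk2
    by_cases hm : memS S (k-1)
    · rw [Ax_n, if_pos hm]; exact down_right hε hm
    · rw [Ax_n, if_neg hm]; exact (Route.refl _).mono (by linarith)

lemma out_r_t : RT S a ε (Ax S n le_rfl) GV.t ε := by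
  by_cases hm : memS S (n-1)
  · rw [Ax_n, if_pos hm]; exact step_vt hε hm
  · rw [Ax_n, if_neg hm]; exact step_wt hε hm

lemma out_r_d (j : Fin (n-1)) (h : (j:ℕ)+1 ≤ n) :
    RT S a ε (Ax S ((j:ℕ)+1) h) (GV.d j) (3*ε) := by
  exact ((out_r_v hε (by omega) h).trans (step_vd' j h)).mono (by linarith)

lemma out_r_d' (j : Fin (n-1)) (h : (j:ℕ)+1 ≤ n) :
    RT S a ε (Ax S ((j:ℕ)+1) h) (GV.d' j) (3*ε) := by
  exact ((out_r_w hε (by omega) h).trans (step_wd'' j h)).mono (by linarith)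

lemma in_l_v {c : ℕ} (hc : 1 ≤ c) (h : c ≤ n) : RT S a ε (Vc c h) (Bx S c h) (2*ε) := by
  by_cases hm : memS S (c-1)
  · rw [Bx, if_pos hm]
    by_cases hcn : c < n
    · exact down_mid hε hc (by omega) h
    · have : c = n := by omega
      subst this
      exact down_right hε hm
  · rw [Bx, if_neg hm]; exact (Route.refl _).mono (by linarith)

lemma in_l_w {c : ℕ} (hc : 1 ≤ c) (h : c ≤ n) : RT S a ε (Wc c h) (Bx S c h) (2*ε) := by
  by_cases hm : memS S (c-1)
  · rw [Bx, if_pos hm]; exact (Route.refl _).mono (by linarith)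
  · rw [Bx, if_neg hm]
    by_cases hcn : c < n
    · exact up_mid hε hc (by omega) h
    · have : c = n := by omega
      subst this
      exact up_right hε hm

lemma in_l_t : RT S a ε GV.t (Bx S n le_rfl) ε := by
  by_cases hm : memS S (n-1)
  · rw [Bx_n, if_pos hm]; exact step_tw hε hm
  · rw [Bx_n, if_neg hm]; exact step_tv hε hm

lemma in_l_d (j : Fin (n-1)) (h : (j:ℕ)+1 ≤ n) :
    RT S a ε (GV.d j) (Bx S ((j:ℕ)+1) h) (3*ε) := by
  exact ((step_dw' j h).trans (in_l_w hε (by omega) h)).mono (by linarith)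

lemma in_l_d' (j : Fin (n-1)) (h : (j:ℕ)+1 ≤ n) :
    RT S a ε (GV.d' j) (Bx S ((j:ℕ)+1) h) (3*ε) := by
  exact ((step_d'v' j h).trans (in_l_v hε (by omega) h)).mono (by linarith)

lemma out_l_v {k : ℕ} (hk : k < n) (h : k ≤ n) : RT S a ε (Bx S k h) (Vc k h) (2*ε) := by
  by_cases hm : memS S (k-1)
  · rw [Bx, if_pos hm]
    rcases Nat.eq_zero_or_pos k with rfl | hk1
    · exact up_left hε (by simpa using hm)
    · exact up_mid hε hk1 (by omega) h
  · rw [Bx, if_neg hm]; exact (Route.refl _).mono (by linarith)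

lemma out_l_w {k : ℕ} (hk : k < n) (h : k ≤ n) : RT S a ε (Bx S k h) (Wc k h) (2*ε) := by
  by_cases hm : memS S (k-1)
  · rw [Bx, if_pos hm]; exact (Route.refl _).mono (by linarith)
  · rw [Bx, if_neg hm]
    rcases Nat.eq_zero_or_pos k with rfl | hk1
    · exact down_left hε (by simpa using hm)
    · exact down_mid hε hk1 (by omega) h

lemma out_l_s : RT S a ε (Bx S 0 (Nat.zero_le n)) GV.s ε := by
  by_cases hm : memS S 0
  · rw [Bx, if_pos (by simpa using hm)]; exact step_ws hε hm
  · rw [Bx, if_neg (by simpa using hm)]; exact step_vs hε hm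

lemma out_l_d (j : Fin (n-1)) (h : (j:ℕ)+1 ≤ n) :
    RT S a ε (Bx S ((j:ℕ)+1) h) (GV.d j) (3*ε) := by
  have := j.isLt
  exact ((out_l_v hε (by omega) h).trans (step_vd' j h)).mono (by linarith)

lemma out_l_d' (j : Fin (n-1)) (h : (j:ℕ)+1 ≤ n) :
    RT S a ε (Bx S ((j:ℕ)+1) h) (GV.d' j) (3*ε) := by
  have := j.isLt
  exact ((out_l_w hε (by omega) h).trans (step_wd'' j h)).mono (by linarith)

lemma down_col {c : ℕ} (h1 : 1 ≤ c) (h2 : c ≤ n) (hif : c = n → memS S (n-1)) :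
    RT S a ε (Vc c h2) (Wc c h2) (2*ε) := by
  by_cases hcn : c < n
  · exact down_mid hε h1 (by omega) h2
  · have hceq : c = n := by omega
    subst hceq
    exact down_right hε (hif rfl)

lemma up_col {c : ℕ} (h1 : 1 ≤ c) (h2 : c ≤ n) (hif : c = n → ¬ memS S (n-1)) :
    RT S a ε (Wc c h2) (Vc c h2) (2*ε) := by
  by_cases hcn : c < n
  · exact up_mid hε h1 (by omega) h2
  · have hceq : c = n := by omega
    subst hceq
    exact up_right hε (hif rfl)

lemma loop_r {c : ℕ} (hc : c < n) (h : c ≤ n) :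
    RT S a ε (Ax S c h) (Cx S c h) ((a ⟨c, hc⟩ : ℝ) + 3*ε) := by
  by_cases hm : memS S c
  · rw [Ax_lt hc, if_pos hm, Cx, if_pos hm]
    have t1 := step_top_r (S := S) (a := a) hε hc hm h (by omega)
    have t2 : RT S a ε (Vc (c+1) (by omega)) (Wc (c+1) (by omega)) (2*ε) :=
      down_col hε (by omega) (by omega) (fun he => by rwa [show n-1 = c by omega])
    have t3 := step_bot_l (S := S) (a := a) hε hc hm h (by omega)
    exact ((t1.trans t2).trans t3).mono (by linarith)
  · rw [Ax_lt hc, if_neg hm, Cx, if_neg hm]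
    have t1 := step_bot_r (S := S) (a := a) hε hc hm h (by omega)
    have t2 : RT S a ε (Wc (c+1) (by omega)) (Vc (c+1) (by omega)) (2*ε) :=
      up_col hε (by omega) (by omega) (fun he => by rwa [show n-1 = c by omega])
    have t3 := step_top_l (S := S) (a := a) hε hc hm h (by omega)
    exact ((t1.trans t2).trans t3).mono (by linarith)

lemma out_c_v {c : ℕ} (hc : c < n) (h) : RT S a ε (Cx S c h) (Vc c h) (2*ε) := by
  by_cases hm : memS S c
  · rw [Cx, if_pos hm]
    rcases Nat.eq_zero_or_pos c with rfl | hc1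
    · exact up_left hε hm
    · exact up_mid hε hc1 (by omega) h
  · rw [Cx, if_neg hm]; exact (Route.refl _).mono (by linarith)

lemma out_c_w {c : ℕ} (hc : c < n) (h) : RT S a ε (Cx S c h) (Wc c h) (2*ε) := by
  by_cases hm : memS S c
  · rw [Cx, if_pos hm]; exact (Route.refl _).mono (by linarith)
  · rw [Cx, if_neg hm]
    rcases Nat.eq_zero_or_pos c with rfl | hc1
    · exact down_left hε hm
    · exact down_mid hε hc1 (by omega) h

lemma out_c_s (h : (0:ℕ) ≤ n) : RT S a ε (Cx S 0 h) GV.s ε := by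
  by_cases hm : memS S 0
  · rw [Cx, if_pos hm]; exact step_ws hε hm
  · rw [Cx, if_neg hm]; exact step_vs hε hm

lemma out_c_d (j : Fin (n-1)) (h : (j:ℕ)+1 ≤ n) :
    RT S a ε (Cx S ((j:ℕ)+1) h) (GV.d j) (3*ε) := by
  have := j.isLt
  exact ((out_c_v hε (by omega) h).trans (step_vd' j h)).mono (by linarith)

lemma out_c_d' (j : Fin (n-1)) (h : (j:ℕ)+1 ≤ n) :
    RT S a ε (Cx S ((j:ℕ)+1) h) (GV.d' j) (3*ε) := by
  have := j.isLt
  exact ((out_c_w hε (by omega) h).trans (step_wd'' j h)).mono (by linarith)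

lemma loop_l (hn : 2 ≤ n) :
    RT S a ε (Bx S n le_rfl) (Ax S n le_rfl) ((a ⟨n-1, by omega⟩ : ℝ) + 3*ε) := by
  obtain ⟨q, rfl⟩ : ∃ q, n = q + 1 := ⟨n-1, by omega⟩
  rw [Bx_n, Ax_n]
  simp only [Nat.add_sub_cancel]
  by_cases hm : memS S q
  · rw [if_pos hm, if_pos hm]
    have t1 := step_bot_l (S := S) (a := a) hε (Nat.lt_succ_self q) hm (by omega) le_rfl
    have t2 : RT S a ε (Wc q (by omega)) (Vc q (by omega)) (2*ε) :=
      up_mid hε (by omega) (by omega) (by omega)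
    have t3 := step_top_r (S := S) (a := a) hε (Nat.lt_succ_self q) hm (by omega) le_rfl
    exact ((t1.trans t2).trans t3).mono (by linarith)
  · rw [if_neg hm, if_neg hm]
    have t1 := step_top_l (S := S) (a := a) hε (Nat.lt_succ_self q) hm (by omega) le_rfl
    have t2 : RT S a ε (Vc q (by omega)) (Wc q (by omega)) (2*ε) :=
      down_mid hε (by omega) (by omega) (by omega)
    have t3 := step_bot_r (S := S) (a := a) hε (Nat.lt_succ_self q) hm (by omega) le_rfl
    exact ((t1.trans t2).trans t3).mono (by linarith)

lemma sweep_r' (i k : ℕ) (hik : i ≤ k) (h : k ≤ n) :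
    RT S a ε (Ax S i (le_trans hik h)) (Ax S k h)
      ((∑ c ∈ SIf S i (k-i), (a c : ℝ)) + (2*((k-i : ℕ) : ℝ) + ((CIf S i (k-i)).card : ℝ)) * ε) := by
  obtain ⟨L, rfl⟩ : ∃ L, k = i + L := ⟨k-i, by omega⟩
  rw [show i + L - i = L by omega]
  exact sweep_r hε i L h

lemma sweep_l' (i k : ℕ) (hik : i ≤ k) (h : k ≤ n) :
    RT S a ε (Bx S k h) (Bx S i (le_trans hik h))
      ((∑ c ∈ CIf S i (k-i), (a c : ℝ)) + (2*((k-i : ℕ) : ℝ) + ((SIf S i (k-i)).card : ℝ)) * ε) := by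
  obtain ⟨L, rfl⟩ : ∃ L, k = i + L := ⟨k-i, by omega⟩
  rw [show i + L - i = L by omega]
  exact sweep_l hε i L h

end access
end travel

section master
variable {n : ℕ}

/-- The column of a vertex. -/
def colOf : GV n → ℕ
  | GV.v i => i
  | GV.w i => i
  | GV.s => 0
  | GV.t => n
  | GV.d j => (j:ℕ)+1
  | GV.d' j => (j:ℕ)+1

lemma colOf_le (u : GV n) : colOf u ≤ n := by
  cases u with
  | v i => exact i.is_le
  | w i => exact i.is_le
  | s => exact Nat.zero_le n
  | t => exact le_rfl
  | d j => show (j:ℕ)+1 ≤ n; have := j.isLt; omega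
  | d' j => show (j:ℕ)+1 ≤ n; have := j.isLt; omega

variable {S : Finset (Fin n)} {a : Fin n → ℕ} {ε : ℝ} (hε : 0 ≤ ε)
include hε

lemma in_any_r (u : GV n) (c : ℕ) (hc : colOf u = c) (h : c < n) :
    RT S a ε u (Ax S c (le_of_lt h)) (3*ε) := by
  cases u with
  | v i => subst hc; exact (in_r_v hε h _).mono (by linarith)
  | w i => subst hc; exact (in_r_w hε h _).mono (by linarith)
  | s => subst hc; exact (in_r_s hε h).mono (by linarith)
  | t => subst hc; exact absurd h (by simp [colOf])
  | d j => subst hc; exact in_r_d hε j (le_of_lt h)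
  | d' j => subst hc; exact in_r_d' hε j (le_of_lt h)

lemma in_any_l (u : GV n) (c : ℕ) (hc : colOf u = c) (h1 : 1 ≤ c) (h2 : c ≤ n) :
    RT S a ε u (Bx S c h2) (3*ε) := by
  cases u with
  | v i => subst hc; exact (in_l_v hε h1 h2).mono (by linarith)
  | w i => subst hc; exact (in_l_w hε h1 h2).mono (by linarith)
  | s => subst hc; exact absurd h1 (by simp [colOf])
  | t => subst hc; exact (in_l_t hε).mono (by linarith)
  | d j => subst hc; exact in_l_d hε j h2
  | d' j => subst hc; exact in_l_d' hε j h2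

lemma out_any_r (v : GV n) (k : ℕ) (hk : colOf v = k) (h1 : 1 ≤ k) (h2 : k ≤ n) :
    RT S a ε (Ax S k h2) v (3*ε) := by
  cases v with
  | v i => subst hk; exact (out_r_v hε h1 h2).mono (by linarith)
  | w i => subst hk; exact (out_r_w hε h1 h2).mono (by linarith)
  | s => subst hk; exact absurd h1 (by simp [colOf])
  | t => subst hk; exact (out_r_t hε).mono (by linarith)
  | d j => subst hk; exact out_r_d hε j h2
  | d' j => subst hk; exact out_r_d' hε j h2

lemma out_any_l (v : GV n) (k : ℕ) (hk : colOf v = k) (h : k < n) :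
    RT S a ε (Bx S k (le_of_lt h)) v (3*ε) := by
  cases v with
  | v i => subst hk; exact (out_l_v hε h _).mono (by linarith)
  | w i => subst hk; exact (out_l_w hε h _).mono (by linarith)
  | s => subst hk; exact (out_l_s hε).mono (by linarith)
  | t => subst hk; exact absurd h (by simp [colOf])
  | d j => subst hk; exact out_l_d hε j (le_of_lt h)
  | d' j => subst hk; exact out_l_d' hε j (le_of_lt h)

lemma out_any_c (v : GV n) (k : ℕ) (hk : colOf v = k) (h : k < n) :
    RT S a ε (Cx S k (le_of_lt h)) v (3*ε) := by
  cases v with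
  | v i => subst hk; exact (out_c_v hε h _).mono (by linarith)
  | w i => subst hk; exact (out_c_w hε h _).mono (by linarith)
  | s => subst hk; exact (out_c_s hε _).mono (by linarith)
  | t => subst hk; exact absurd h (by simp [colOf])
  | d j => subst hk; exact out_c_d hε j (le_of_lt h)
  | d' j => subst hk; exact out_c_d' hε j (le_of_lt h)

lemma single_le_sumS (hEq : (∑ c ∈ Sᶜ, (a c:ℝ)) = ∑ c ∈ S, (a c:ℝ)) (x : Fin n) :
    (a x : ℝ) ≤ ∑ c ∈ S, (a c:ℝ) := by
  by_cases hx : x ∈ S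
  · exact Finset.single_le_sum (f := fun c => (a c : ℝ)) (fun _ _ => by positivity) hx
  · calc (a x:ℝ) ≤ ∑ c ∈ Sᶜ, (a c:ℝ) :=
        Finset.single_le_sum (f := fun c => (a c : ℝ)) (fun _ _ => by positivity) (Finset.mem_compl.mpr hx)
      _ = _ := hEq

lemma master (hn : 2 ≤ n) (hSne : S.Nonempty) (hCne : Sᶜ.Nonempty)
    (hEq : (∑ c ∈ Sᶜ, (a c:ℝ)) = ∑ c ∈ S, (a c:ℝ)) (u v : GV n) :
    RT S a ε u v ((∑ c ∈ S, (a c:ℝ)) + (3*(n:ℝ)+5)*ε) := by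
  have hcards : S.card + Sᶜ.card = n := by
    rw [Finset.card_add_card_compl]; simp
  have hcard_compl : Sᶜ.card ≤ n - 1 := by
    have := Finset.card_pos.mpr hSne; omega
  have hcardS : S.card ≤ n - 1 := by
    have := Finset.card_pos.mpr hCne; omega
  have hnR : (2:ℝ) ≤ (n:ℝ) := by exact_mod_cast hn
  rcases lt_trichotomy (colOf u) (colOf v) with hlt | heq | hgt
  · have h1 := in_any_r (S := S) (a := a) hε u (colOf u) rfl (lt_of_lt_of_le hlt (colOf_le v))
    have h2 := sweep_r' (S := S) (a := a) hε (colOf u) (colOf v) (le_of_lt hlt) (colOf_le v)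
    have h3 := out_any_r (S := S) (a := a) hε v (colOf v) rfl (by omega) (colOf_le v)
    refine ((h1.trans h2).trans h3).mono ?_
    have e1 : (∑ c ∈ SIf S (colOf u) (colOf v - colOf u), (a c:ℝ)) ≤ ∑ c ∈ S, (a c:ℝ) :=
      Finset.sum_le_sum_of_subset_of_nonneg (Finset.filter_subset _ _)
        (fun _ _ _ => by positivity)
    have e2 : ((CIf S (colOf u) (colOf v - colOf u)).card : ℝ) ≤ ((n-1 : ℕ) : ℝ) :=
      Nat.cast_le.mpr (le_trans (Finset.card_le_card (Finset.filter_subset _ _)) hcard_compl)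
    have e2' : ((n-1 : ℕ):ℝ) = (n:ℝ) - 1 := by
      have : (1:ℕ) ≤ n := by omega
      push_cast [this]; ring
    have e3 : ((colOf v - colOf u : ℕ):ℝ) ≤ (n:ℝ) := by
      have : colOf v - colOf u ≤ n := by have := colOf_le v; omega
      exact_mod_cast this
    have hmul : (2*((colOf v - colOf u : ℕ):ℝ) + ((CIf S (colOf u) (colOf v - colOf u)).card : ℝ))
        * ε ≤ (2*(n:ℝ) + ((n:ℝ)-1)) * ε :=
      mul_le_mul_of_nonneg_right (by rw [e2'] at e2; linarith) hε
    nlinarith [hmul, e1, hε]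
  · by_cases hcn : colOf u < n
    · have h1 := in_any_r (S := S) (a := a) hε u (colOf u) rfl hcn
      have h2 := loop_r (S := S) (a := a) hε hcn (le_of_lt hcn)
      have h3 := out_any_c (S := S) (a := a) hε v (colOf u) heq.symm hcn
      refine ((h1.trans h2).trans h3).mono ?_
      have := single_le_sumS hε hEq ⟨colOf u, hcn⟩
      nlinarith [hε, this]
    · have hceq : colOf u = n := by have := colOf_le u; omega
      have h1 := in_any_l (S := S) (a := a) hε u n hceq (by omega) le_rfl
      have h2 := loop_l (S := S) (a := a) hε hn
      have h3 := out_any_r (S := S) (a := a) hε v n (heq ▸ hceq) (by omega) le_rfl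
      refine ((h1.trans h2).trans h3).mono ?_
      have := single_le_sumS hε hEq ⟨n-1, by omega⟩
      nlinarith [hε, this]
  · have h1 := in_any_l (S := S) (a := a) hε u (colOf u) rfl (by omega) (colOf_le u)
    have h2 := sweep_l' (S := S) (a := a) hε (colOf v) (colOf u) (le_of_lt hgt) (colOf_le u)
    have h3 := out_any_l (S := S) (a := a) hε v (colOf v) rfl (lt_of_lt_of_le hgt (colOf_le u))
    refine ((h1.trans h2).trans h3).mono ?_
    have e1 : (∑ c ∈ CIf S (colOf v) (colOf u - colOf v), (a c:ℝ)) ≤ ∑ c ∈ S, (a c:ℝ) := by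
      calc _ ≤ ∑ c ∈ Sᶜ, (a c:ℝ) := Finset.sum_le_sum_of_subset_of_nonneg
              (Finset.filter_subset _ _) (fun _ _ _ => by positivity)
        _ = _ := hEq
    have e2 : ((SIf S (colOf v) (colOf u - colOf v)).card : ℝ) ≤ ((n-1 : ℕ) : ℝ) :=
      Nat.cast_le.mpr (le_trans (Finset.card_le_card (Finset.filter_subset _ _)) hcardS)
    have e2' : ((n-1 : ℕ):ℝ) = (n:ℝ) - 1 := by
      have : (1:ℕ) ≤ n := by omega
      push_cast [this]; ring
    have e3 : ((colOf u - colOf v : ℕ):ℝ) ≤ (n:ℝ) := by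
      have : colOf u - colOf v ≤ n := by have := colOf_le u; omega
      exact_mod_cast this
    have hmul : (2*((colOf u - colOf v : ℕ):ℝ) + ((SIf S (colOf v) (colOf u - colOf v)).card : ℝ))
        * ε ≤ (2*(n:ℝ) + ((n:ℝ)-1)) * ε :=
      mul_le_mul_of_nonneg_right (by rw [e2'] at e2; linarith) hε
    nlinarith [hmul, e1, hε]

end master

section glue

lemma gridWt_nonneg {n : ℕ} {a : Fin n → ℕ} {ε : ℝ} (hε : 0 ≤ ε) (p q : GV n) :
    0 ≤ gridWt n a ε p q := by
  cases p <;> cases q <;> try exact hε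
  case v.v i j =>
    simp only [gridWt]
    split_ifs
    · exact Nat.cast_nonneg _
    · exact hε

lemma dist_le_of_route {V : Type*} {D : V → V → Prop} {wt : V → V → ℝ}
    (hwt : ∀ p q, 0 ≤ wt p q) {u v : V} {b : ℝ} (h : Route D wt u v b) :
    wDirDist D wt u v ≤ b := by
  obtain ⟨l, hc, he, hw⟩ := h
  obtain ⟨k, f, hdw, hsum⟩ := exists_diwalk (wt := wt) u l hc
  rw [he] at hdw
  have hb : BddBelow {x | ∃ (k : ℕ) (f : Fin (k + 1) → V), IsDiwalk D f u v ∧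
      x = ∑ i : Fin k, wt (f i.castSucc) (f i.succ)} := by
    refine ⟨0, ?_⟩
    rintro x ⟨k', f', _, rfl⟩
    exact Finset.sum_nonneg fun _ _ => hwt _ _
  have hmem : (∑ i : Fin k, wt (f i.castSucc) (f i.succ)) ∈ {x | ∃ (k : ℕ)
      (f : Fin (k + 1) → V), IsDiwalk D f u v ∧
      x = ∑ i : Fin k, wt (f i.castSucc) (f i.succ)} := ⟨k, f, hdw, rfl⟩
  calc wDirDist D wt u v ≤ _ := csInf_le hb hmem
    _ = lwt wt u l := hsum
    _ ≤ b := hw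

lemma strong_of_route {V : Type*} {D : V → V → Prop} {wt : V → V → ℝ} {b : ℝ}
    (h : ∀ u v : V, Route D wt u v b) : IsStrong D := by
  intro u v
  obtain ⟨l, hc, he, _⟩ := h u v
  obtain ⟨k, f, hdw, _⟩ := exists_diwalk (wt := wt) u l hc
  rw [he] at hdw
  exact ⟨k, f, hdw⟩

lemma master0 {S : Finset (Fin 0)} {a : Fin 0 → ℕ} {ε : ℝ} (hε : 0 ≤ ε) (u v : GV 0) :
    Route (orient S) (gridWt 0 a ε) u v (3*ε) := by
  have hm : memS S 0 := by rw [memS]; simp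
  have r1 : Route (orient S) (gridWt 0 a ε) GV.s (GV.v 0) ε :=
    Route.single (show orient S GV.s (GV.v 0) from ⟨rfl, hm⟩) le_rfl
  have r2 : Route (orient S) (gridWt 0 a ε) (GV.v 0) GV.t ε :=
    Route.single (show orient S (GV.v 0) GV.t from ⟨rfl, hm⟩) le_rfl
  have r3 : Route (orient S) (gridWt 0 a ε) GV.t (GV.w 0) ε :=
    Route.single (show orient S GV.t (GV.w 0) from ⟨rfl, hm⟩) le_rfl
  have r4 : Route (orient S) (gridWt 0 a ε) (GV.w 0) GV.s ε :=
    Route.single (show orient S (GV.w 0) GV.s from ⟨rfl, hm⟩) le_rfl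
  rcases u with i|i|_|_|j|j
  case d => exact j.elim0
  case d' => exact j.elim0
  case v =>
    obtain rfl : i = 0 := Fin.ext (by omega)
    rcases v with i'|i'|_|_|j'|j'
    case d => exact j'.elim0
    case d' => exact j'.elim0
    case v =>
      obtain rfl : i' = 0 := Fin.ext (by omega)
      exact (Route.refl _).mono (by linarith)
    case w =>
      obtain rfl : i' = 0 := Fin.ext (by omega)
      exact (r2.trans r3).mono (by linarith)
    case s => exact ((r2.trans r3).trans r4).mono (by linarith)
    case t => exact r2.mono (by linarith)
  case w =>
    obtain rfl : i = 0 := Fin.ext (by omega)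
    rcases v with i'|i'|_|_|j'|j'
    case d => exact j'.elim0
    case d' => exact j'.elim0
    case v =>
      obtain rfl : i' = 0 := Fin.ext (by omega)
      exact (r4.trans r1).mono (by linarith)
    case w =>
      obtain rfl : i' = 0 := Fin.ext (by omega)
      exact (Route.refl _).mono (by linarith)
    case s => exact r4.mono (by linarith)
    case t => exact ((r4.trans r1).trans r2).mono (by linarith)
  case s =>
    rcases v with i'|i'|_|_|j'|j'
    case d => exact j'.elim0
    case d' => exact j'.elim0
    case v =>
      obtain rfl : i' = 0 := Fin.ext (by omega)
      exact r1.mono (by linarith)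
    case w =>
      obtain rfl : i' = 0 := Fin.ext (by omega)
      exact ((r1.trans r2).trans r3).mono (by linarith)
    case s => exact (Route.refl _).mono (by linarith)
    case t => exact (r1.trans r2).mono (by linarith)
  case t =>
    rcases v with i'|i'|_|_|j'|j'
    case d => exact j'.elim0
    case d' => exact j'.elim0
    case v =>
      obtain rfl : i' = 0 := Fin.ext (by omega)
      exact ((r3.trans r4).trans r1).mono (by linarith)
    case w =>
      obtain rfl : i' = 0 := Fin.ext (by omega)
      exact r3.mono (by linarith)
    case s => exact (r3.trans r4).mono (by linarith)
    case t => exact (Route.refl _).mono (by linarith)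

end glue

/-- If the positive integers `a₁,…,aₙ` can be partitioned into two subsets of equal sums,
then the weighted gadget graph `G(a₁,…,aₙ)` (all non-top edges weighted `ε = 1/m`, `m` the
number of edges) admits a strong orientation of weighted diameter at most
`D = 1 + (Σ aᵢ)/2 - ε`. -/
theorem gridGraph_partition_imp_orientation (n : ℕ) (a : Fin n → ℕ) (ha : ∀ i, 0 < a i)
    (hpart : ∃ S : Finset (Fin n), ∑ i ∈ S, a i = ∑ i ∈ Sᶜ, a i) :
    ∃ D : GV n → GV n → Prop, IsOrientation (gridGraph n) D ∧ IsStrong D ∧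
      wDirDiam D (gridWt n a (1 / ((gridGraph n).edgeSet.ncard : ℝ))) ≤
        1 + (∑ i : Fin n, (a i : ℝ)) / 2 - 1 / ((gridGraph n).edgeSet.ncard : ℝ) := by
  classical
  obtain ⟨S, hS⟩ := hpart
  set m : ℕ := (gridGraph n).edgeSet.ncard with hmdef
  set ε : ℝ := 1 / (m:ℝ) with hεdef
  have hmge : 2 * n + 4 * (n - 1) + 4 ≤ m := edgeCount_ge
  have hm0 : (0:ℝ) < (m:ℝ) := by
    have : 0 < m := by omega
    exact_mod_cast this
  have hε : 0 ≤ ε := by rw [hεdef]; positivity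
  have hε1 : (m:ℝ) * ε = 1 := by
    rw [hεdef]; field_simp
  have hε4 : 4 * ε ≤ 1 := by
    have h4 : ((4:ℕ):ℝ) ≤ (m:ℝ) := by exact_mod_cast (by omega : 4 ≤ m)
    calc 4 * ε ≤ (m:ℝ) * ε := by
          refine mul_le_mul_of_nonneg_right ?_ hε
          exact_mod_cast h4
      _ = 1 := hε1
  have hsum_nonneg : 0 ≤ ∑ i : Fin n, (a i : ℝ) :=
    Finset.sum_nonneg fun _ _ => by positivity
  have key : ∀ u v : GV n, Route (orient S) (gridWt n a ε) u v
      (1 + (∑ i : Fin n, (a i : ℝ)) / 2 - ε) := by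
    by_cases hn0 : n = 0
    · subst hn0
      intro u v
      refine (master0 hε u v).mono ?_
      have : (∑ i : Fin 0, (a i : ℝ)) = 0 := by simp
      rw [this]
      linarith
    · have hn1 : 1 ≤ n := by omega
      have hSne : S.Nonempty := by
        rcases S.eq_empty_or_nonempty with rfl | h
        · exfalso
          rw [Finset.sum_empty, Finset.compl_empty] at hS
          have hpos : 0 < ∑ i : Fin n, a i :=
            Finset.sum_pos (fun i _ => ha i) ⟨⟨0, by omega⟩, Finset.mem_univ _⟩
          omega
        · exact h
      have hCne : Sᶜ.Nonempty := by
        rcases Sᶜ.eq_empty_or_nonempty with he | h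
        · exfalso
          rw [he, Finset.sum_empty] at hS
          have hSu : S = Finset.univ := by
            rwa [Finset.compl_eq_empty_iff] at he
          rw [hSu] at hS
          have hpos : 0 < ∑ i : Fin n, a i :=
            Finset.sum_pos (fun i _ => ha i) ⟨⟨0, by omega⟩, Finset.mem_univ _⟩
          omega
        · exact h
      have hcards : S.card + Sᶜ.card = n := by
        rw [Finset.card_add_card_compl]; simp
      have hn2 : 2 ≤ n := by
        have h1 := Finset.card_pos.mpr hSne
        have h2 := Finset.card_pos.mpr hCne
        omega
      have hEq : (∑ c ∈ Sᶜ, (a c:ℝ)) = ∑ c ∈ S, (a c:ℝ) := by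
        exact_mod_cast congrArg (Nat.cast : ℕ → ℝ) hS.symm
      have htot : (∑ c ∈ S, (a c:ℝ)) + (∑ c ∈ Sᶜ, (a c:ℝ)) = ∑ i : Fin n, (a i:ℝ) :=
        Finset.sum_add_sum_compl S _
      have hhalf : (∑ c ∈ S, (a c:ℝ)) = (∑ i : Fin n, (a i:ℝ)) / 2 := by linarith
      have hbound : (3*(n:ℝ)+5)*ε + ε ≤ 1 := by
        have hc : ((3*n+6 : ℕ):ℝ) ≤ (m:ℝ) := by
          exact_mod_cast (by omega : 3*n+6 ≤ m)
        have := mul_le_mul_of_nonneg_right hc hε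
        rw [hε1] at this
        calc (3*(n:ℝ)+5)*ε + ε = ((3*n+6 : ℕ):ℝ) * ε := by push_cast; ring
          _ ≤ 1 := this
      intro u v
      refine (master (S := S) (a := a) hε hn2 hSne hCne hEq u v).mono ?_
      rw [hhalf]
      linarith
  refine ⟨orient S, orient_isOrientation S, strong_of_route key, ?_⟩
  refine Real.sSup_le ?_ ?_
  · rintro x ⟨u, v, hne, rfl⟩
    exact dist_le_of_route (gridWt_nonneg hε) (key u v)
  · linarith
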